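/- Let s = i·√7 ∈ ℂ (so s² = -7) and let F(w,x,y,z) = w² + (x⁴ + y⁴ + z⁴) - (3/2)·(1 - s)·(x²y² + x²z² + y²z²) over ℂ. If (v,a,b,c) ∈ ℂ⁴ is a point at which all four partial derivatives ∂F/∂w, ∂F/∂x, ∂F/∂y, ∂F/∂z vanish, then v = a = b = c = 0. In other words, the surface F = 0 in the weighted projective space ℙ(2,1,1,1) over ℂ is smooth, i.e. is a smooth del Pezzo surface of degree 2. -/

import Mathlib

open Complex

/-- `s = i√7`, a square root of `-7` in `ℂ`. -/
noncomputable def s : ℂ := Complex.I * (Real.sqrt 7 : ℝ)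

lemma hs7 : s ^ 2 = -7 := by
  have h : ((Real.sqrt 7 : ℝ) : ℂ) ^ 2 = 7 := by
    norm_cast
    rw [Real.sq_sqrt]; norm_num
  simp [s, mul_pow, Complex.I_sq, h]

/-- `F(w,x,y,z) = w² + x⁴+y⁴+z⁴ - (3/2)(1-s)(x²y²+x²z²+y²z²)`. -/
noncomputable def F (w x y z : ℂ) : ℂ :=
  w ^ 2 + (x ^ 4 + y ^ 4 + z ^ 4)
    - (3 / 2 : ℂ) * (1 - s) * (x ^ 2 * y ^ 2 + x ^ 2 * z ^ 2 + y ^ 2 * z ^ 2)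

lemma deriv_w (v a b c : ℂ) : deriv (fun w => F w a b c) v = 2 * v := by
  have h : (fun w : ℂ => F w a b c)
      = fun w => ((a ^ 4 + b ^ 4 + c ^ 4)
        - (3 / 2 : ℂ) * (1 - s) * (a ^ 2 * b ^ 2 + a ^ 2 * c ^ 2 + b ^ 2 * c ^ 2)) + w ^ 2 := by
    funext w; simp only [F]; ring
  have h2 : HasDerivAt (fun w : ℂ => w ^ 2) (2 * v) v := by simpa using hasDerivAt_pow 2 v
  rw [h]; exact (((hasDerivAt_const v _).add h2).deriv).trans (by ring)

lemma deriv_x (v a b c : ℂ) :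
    deriv (fun x => F v x b c) a = 4 * a ^ 3 - 3 * (1 - s) * (a * (b ^ 2 + c ^ 2)) := by
  have h : (fun x : ℂ => F v x b c)
      = fun x => (v ^ 2 + (b ^ 4 + c ^ 4) - (3 / 2 : ℂ) * (1 - s) * (b ^ 2 * c ^ 2))
        + (x ^ 4 + (-(3 / 2 : ℂ) * (1 - s) * (b ^ 2 + c ^ 2)) * x ^ 2) := by
    funext x; simp only [F]; ring
  have p4 : HasDerivAt (fun x : ℂ => x ^ 4) (4 * a ^ 3) a := by simpa using hasDerivAt_pow 4 a
  have p2 : HasDerivAt (fun x : ℂ => x ^ 2) (2 * a) a := by simpa using hasDerivAt_pow 2 a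
  rw [h]; exact (((hasDerivAt_const a _).add (p4.add (p2.const_mul _))).deriv).trans (by ring)

/-- The surface `F = 0` in `ℙ(2,1,1,1)` is smooth: the four partial derivatives of `F`
vanish simultaneously only at the origin of `ℂ⁴`. -/
theorem stmt_9 (v a b c : ℂ)
    (hw : deriv (fun w => F w a b c) v = 0)
    (hx : deriv (fun x => F v x b c) a = 0)
    (hy : deriv (fun y => F v a y c) b = 0)
    (hz : deriv (fun z => F v a b z) c = 0) :
    v = 0 ∧ a = 0 ∧ b = 0 ∧ c = 0 := by
  have hs := hs7
  -- v = 0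
  rw [deriv_w] at hw
  have hv : v = 0 := by
    linear_combination hw / 2
  -- symmetry of F lets us reuse deriv_x
  have hFy : (fun y => F v a y c) = fun y => F v y a c := by
    funext y; simp only [F]; ring
  have hFz : (fun z => F v a b z) = fun z => F v z a b := by
    funext z; simp only [F]; ring
  rw [deriv_x] at hx
  rw [hFy, deriv_x] at hy
  rw [hFz, deriv_x] at hz
  -- factored forms
  have ea : a * (4 * a ^ 2 - 3 * (1 - s) * (b ^ 2 + c ^ 2)) = 0 := by linear_combination hx
  have eb : b * (4 * b ^ 2 - 3 * (1 - s) * (a ^ 2 + c ^ 2)) = 0 := by linear_combination hy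
  have ec : c * (4 * c ^ 2 - 3 * (1 - s) * (a ^ 2 + b ^ 2)) = 0 := by linear_combination hz
  -- nonvanishing facts about s
  have nz1 : (3 : ℂ) * (1 - s) ≠ 0 := by
    intro h
    have : (72 : ℂ) = 0 := by linear_combination 9 * hs + (3 + 3 * s) * h
    norm_num at this
  have nz2 : (4 : ℂ) + 3 * (1 - s) ≠ 0 := by
    intro h
    have : (112 : ℂ) = 0 := by linear_combination 9 * hs + (7 + 3 * s) * h
    norm_num at this
  have nz3 : (4 : ℂ) - 2 * (3 * (1 - s)) ≠ 0 := by
    intro h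
    have : (256 : ℂ) = 0 := by linear_combination 36 * hs + (-2 - 6 * s) * h
    norm_num at this
  have nz4 : (16 : ℂ) - (3 * (1 - s)) ^ 2 ≠ 0 := by
    intro h
    have : (7168 : ℂ) = 0 := by
      linear_combination (9 * (70 - 18 * s) + 324) * hs + (70 - 18 * s) * h
    norm_num at this
  -- helper for the "two nonzero" situation
  have two : ∀ p q : ℂ, 4 * p ^ 2 - 3 * (1 - s) * q ^ 2 = 0 →
      4 * q ^ 2 - 3 * (1 - s) * p ^ 2 = 0 → p = 0 ∧ q = 0 := by
    intro p q h1 h2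
    have hp2 : ((16 : ℂ) - (3 * (1 - s)) ^ 2) * p ^ 2 = 0 := by
      linear_combination 4 * h1 + 3 * (1 - s) * h2
    have hp : p = 0 := by
      rcases mul_eq_zero.mp hp2 with h | h
      · exact absurd h nz4
      · exact pow_eq_zero_iff (by norm_num) |>.mp h
    have hq : q = 0 := by
      have : 4 * q ^ 2 = 0 := by rw [hp] at h2; linear_combination h2
      have : q ^ 2 = 0 := by linear_combination this / 4
      exact pow_eq_zero_iff (by norm_num) |>.mp this
    exact ⟨hp, hq⟩
  rcases mul_eq_zero.mp ea with ha | ha <;> rcases mul_eq_zero.mp eb with hb | hb <;>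
    rcases mul_eq_zero.mp ec with hc | hc
  · exact ⟨hv, ha, hb, hc⟩
  · -- a = 0, b = 0, eq for c
    have : c = 0 := by
      have : 4 * c ^ 2 = 0 := by rw [ha, hb] at hc; linear_combination hc
      have : c ^ 2 = 0 := by linear_combination this / 4
      exact pow_eq_zero_iff (by norm_num) |>.mp this
    exact ⟨hv, ha, hb, this⟩
  · -- a = 0, eq for b, c = 0
    have : b = 0 := by
      have : 4 * b ^ 2 = 0 := by rw [ha, hc] at hb; linear_combination hb
      have : b ^ 2 = 0 := by linear_combination this / 4
      exact pow_eq_zero_iff (by norm_num) |>.mp this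
    exact ⟨hv, ha, this, hc⟩
  · -- a = 0, eqs for b and c
    rw [ha] at hb hc
    obtain ⟨h1, h2⟩ := two b c (by linear_combination hb) (by linear_combination hc)
    exact ⟨hv, ha, h1, h2⟩
  · -- eq for a, b = 0, c = 0
    have : a = 0 := by
      have : 4 * a ^ 2 = 0 := by rw [hb, hc] at ha; linear_combination ha
      have : a ^ 2 = 0 := by linear_combination this / 4
      exact pow_eq_zero_iff (by norm_num) |>.mp this
    exact ⟨hv, this, hb, hc⟩
  · -- eqs for a, c; b = 0
    rw [hb] at ha hc
    obtain ⟨h1, h2⟩ := two a c (by linear_combination ha) (by linear_combination hc)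
    exact ⟨hv, h1, hb, h2⟩
  · -- eqs for a, b; c = 0
    rw [hc] at ha hb
    obtain ⟨h1, h2⟩ := two a b (by linear_combination ha) (by linear_combination hb)
    exact ⟨hv, h1, h2, hc⟩
  · -- all three equations hold
    have hab : ((4 : ℂ) + 3 * (1 - s)) * (a ^ 2 - b ^ 2) = 0 := by
      linear_combination ha - hb
    have hab2 : a ^ 2 = b ^ 2 := by
      rcases mul_eq_zero.mp hab with h | h
      · exact absurd h nz2
      · linear_combination h
    have hac : ((4 : ℂ) + 3 * (1 - s)) * (a ^ 2 - c ^ 2) = 0 := by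
      linear_combination ha - hc
    have hac2 : a ^ 2 = c ^ 2 := by
      rcases mul_eq_zero.mp hac with h | h
      · exact absurd h nz2
      · linear_combination h
    have haa : ((4 : ℂ) - 2 * (3 * (1 - s))) * a ^ 2 = 0 := by
      linear_combination ha - 3 * (1 - s) * (hab2 + hac2)
    have ha0 : a = 0 := by
      rcases mul_eq_zero.mp haa with h | h
      · exact absurd h nz3
      · exact pow_eq_zero_iff (by norm_num) |>.mp h
    have hb0 : b = 0 := by
      have : b ^ 2 = 0 := by rw [ha0] at hab2; linear_combination -hab2
      exact pow_eq_zero_iff (by norm_num) |>.mp this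
    have hc0 : c = 0 := by
      have : c ^ 2 = 0 := by rw [ha0] at hac2; linear_combination -hac2
      exact pow_eq_zero_iff (by norm_num) |>.mp this
    exact ⟨hv, ha0, hb0, hc0⟩
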